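/- Let n ∈ ℕ and let ζ ∈ ℂ with Im ζ > 0. Then for every real z the function t ↦ t^{n+1} e^{iζ|t|} e^{izt} is integrable on ℝ, the complex numbers z-ζ and z+ζ are nonzero, and ∫_ℝ t^{n+1} e^{iζ|t|} e^{izt} dt = (n+1)! · i^n · ( (z-ζ)^{-(n+2)} - (z+ζ)^{-(n+2)} ). -/

import Mathlib

open MeasureTheory Complex

open Set Filter

set_option maxHeartbeats 1000000

lemma aux_integrableOn (b : ℂ) (hb : 0 < b.re) (m : ℕ) :
    IntegrableOn (fun t : ℝ => (t : ℂ) ^ m * Complex.exp (-(b * t))) (Ioi 0) := by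
  have hreal : IntegrableOn (fun x : ℝ => x ^ (m : ℝ) * Real.exp (-b.re * x ^ (1 : ℝ)))
      (Ioi 0) :=
    integrableOn_rpow_mul_exp_neg_mul_rpow
      (lt_of_lt_of_le neg_one_lt_zero (Nat.cast_nonneg m)) zero_lt_one hb
  refine Integrable.mono' hreal ?_ ?_
  · exact (Continuous.aestronglyMeasurable (by fun_prop)).restrict
  · filter_upwards [ae_restrict_mem measurableSet_Ioi] with t ht
    have ht0 : (0 : ℝ) ≤ t := le_of_lt ht
    rw [norm_mul, norm_pow, Complex.norm_real, Real.norm_eq_abs, _root_.abs_of_nonneg ht0,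
      Complex.norm_exp]
    have : (-(b * t)).re = -b.re * t ^ (1 : ℝ) := by
      simp [Complex.mul_re, Real.rpow_one]
    rw [this, Real.rpow_natCast]

lemma aux_tendsto (b : ℂ) (hb : 0 < b.re) (m : ℕ) :
    Tendsto (fun t : ℝ => (t : ℂ) ^ m * Complex.exp (-(b * t))) atTop (nhds 0) := by
  have hg : Tendsto (fun t : ℝ => t ^ (m : ℝ) * Real.exp (-b.re * t)) atTop (nhds 0) :=
    tendsto_rpow_mul_exp_neg_mul_atTop_nhds_zero _ _ hb
  apply squeeze_zero_norm' _ hg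
  filter_upwards [eventually_ge_atTop (0 : ℝ)] with t ht
  rw [norm_mul, norm_pow, Complex.norm_real, Real.norm_eq_abs, _root_.abs_of_nonneg ht,
    Complex.norm_exp]
  have : (-(b * t)).re = -b.re * t := by simp [Complex.mul_re]
  rw [this, Real.rpow_natCast]

lemma aux_hasDerivAt (b : ℂ) (m : ℕ) (t : ℝ) :
    HasDerivAt (fun t : ℝ => (t : ℂ) ^ (m + 1) * Complex.exp (-(b * t)))
      (((m : ℂ) + 1) * ((t : ℂ) ^ m * Complex.exp (-(b * t)))
        + (-b) * ((t : ℂ) ^ (m + 1) * Complex.exp (-(b * t)))) t := by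
  have h0 : HasDerivAt (fun t : ℝ => ((t : ℝ) : ℂ)) 1 t := by
    simpa using (hasDerivAt_id t).ofReal_comp
  have h1 : HasDerivAt (fun t : ℝ => ((t : ℝ) : ℂ) ^ (m + 1))
      ((m + 1 : ℕ) * (t : ℂ) ^ m * 1) t := (hasDerivAt_pow (m + 1) _).comp t h0
  have h2 : HasDerivAt (fun t : ℝ => -(b * (t : ℝ))) (-b) t := by
    have := (h0.const_mul b).neg; simp only [mul_one] at this; exact this
  have h3 : HasDerivAt (fun t : ℝ => Complex.exp (-(b * t)))
      (Complex.exp (-(b * t)) * (-b)) t := h2.cexp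
  have := h1.mul h3
  refine this.congr_deriv ?_
  push_cast
  ring

lemma aux_integral (b : ℂ) (hb : 0 < b.re) :
    ∀ m : ℕ, ∫ t in Ioi (0 : ℝ), (t : ℂ) ^ m * Complex.exp (-(b * t)) =
      (m.factorial : ℂ) / b ^ (m + 1) := by
  have hb0 : b ≠ 0 := fun h => by simp [h] at hb
  intro m
  induction m with
  | zero =>
    have key : ∫ t in Ioi (0 : ℝ), (fun t : ℝ => Complex.exp (-(b * t))) t
        = 0 - (-b⁻¹ * Complex.exp (-(b * (0 : ℝ)))) := by
      refine integral_Ioi_of_hasDerivAt_of_tendsto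
        (f := fun t : ℝ => -b⁻¹ * Complex.exp (-(b * t))) ?_ ?_ ?_ ?_
      · exact (Continuous.continuousWithinAt (by fun_prop))
      · intro x hx
        have h0 : HasDerivAt (fun t : ℝ => ((t : ℝ) : ℂ)) 1 x := by
          simpa using (hasDerivAt_id x).ofReal_comp
        have h2 : HasDerivAt (fun t : ℝ => -(b * (t : ℝ))) (-b) x := by
          have := (h0.const_mul b).neg; simp only [mul_one] at this; exact this
        have := (h2.cexp).const_mul (-b⁻¹)
        refine this.congr_deriv ?_
        field_simp
      · simpa using (aux_integrableOn b hb 0)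
      · have := (aux_tendsto b hb 0).const_mul (-b⁻¹)
        simpa using this
    simp only [Complex.ofReal_zero, mul_zero, neg_zero, Complex.exp_zero, mul_one,
      zero_sub, neg_neg] at key
    simp only [pow_zero, one_mul, key]
    simp
  | succ m ih =>
    have key : ∫ t in Ioi (0 : ℝ),
        (((m : ℂ) + 1) * ((t : ℂ) ^ m * Complex.exp (-(b * t)))
          + (-b) * ((t : ℂ) ^ (m + 1) * Complex.exp (-(b * t))))
        = 0 - ((0 : ℂ) ^ (m + 1) * Complex.exp (-(b * (0 : ℝ)))) := by
      refine integral_Ioi_of_hasDerivAt_of_tendsto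
        (f := fun t : ℝ => (t : ℂ) ^ (m + 1) * Complex.exp (-(b * t))) ?_
        (fun x _ => aux_hasDerivAt b m x) ?_ (aux_tendsto b hb (m + 1)) |>.trans ?_
      · exact (Continuous.continuousWithinAt (by fun_prop))
      · exact ((aux_integrableOn b hb m).const_mul _).add
          ((aux_integrableOn b hb (m + 1)).const_mul _)
      · simp
    rw [integral_add ((aux_integrableOn b hb m).const_mul _)
        ((aux_integrableOn b hb (m + 1)).const_mul _),
      integral_const_mul, integral_const_mul, ih] at key
    have hbp : b ^ (m + 1) ≠ 0 := pow_ne_zero _ hb0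
    have h2 : (-b) * ∫ t in Ioi (0 : ℝ), (t : ℂ) ^ (m + 1) * Complex.exp (-(b * t))
        = -(((m : ℂ) + 1) * ((m.factorial : ℂ) / b ^ (m + 1))) := by
      have := key
      simp at this
      linear_combination this
    have h4 : b * ∫ t in Ioi (0 : ℝ), (t : ℂ) ^ (m + 1) * Complex.exp (-(b * t))
        = ((m : ℂ) + 1) * ((m.factorial : ℂ) / b ^ (m + 1)) := by
      linear_combination -h2
    have h5 : (∫ t in Ioi (0 : ℝ), (t : ℂ) ^ (m + 1) * Complex.exp (-(b * t)))
        = b⁻¹ * (((m : ℂ) + 1) * ((m.factorial : ℂ) / b ^ (m + 1))) := by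
      rw [← h4, inv_mul_cancel_left₀ hb0]
    rw [h5, Nat.factorial_succ]
    push_cast
    field_simp
    ring

/-- For `n ∈ ℕ` and `ζ ∈ ℂ` with `Im ζ > 0`, for every real `z` the function
`t ↦ t^{n+1} e^{iζ|t|} e^{izt}` is integrable on `ℝ`, the numbers `z-ζ` and `z+ζ`
are nonzero, and
`∫_ℝ t^{n+1} e^{iζ|t|} e^{izt} dt = (n+1)! · i^n · ((z-ζ)^{-(n+2)} - (z+ζ)^{-(n+2)})`. -/
theorem fourier_transform_power_exp (n : ℕ) (ζ : ℂ) (hζ : 0 < ζ.im) (z : ℝ) :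
    Integrable (fun t : ℝ =>
      (t : ℂ) ^ (n + 1) * Complex.exp (Complex.I * ζ * |t|) * Complex.exp (Complex.I * z * t)) ∧
    (z : ℂ) - ζ ≠ 0 ∧ (z : ℂ) + ζ ≠ 0 ∧
    (∫ t : ℝ, (t : ℂ) ^ (n + 1) * Complex.exp (Complex.I * ζ * |t|)
        * Complex.exp (Complex.I * z * t)) =
      ((n + 1).factorial : ℂ) * Complex.I ^ n *
        ((((z : ℂ) - ζ) ^ (n + 2))⁻¹ - (((z : ℂ) + ζ) ^ (n + 2))⁻¹) := by
  set f : ℝ → ℂ := fun t : ℝ =>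
    (t : ℂ) ^ (n + 1) * Complex.exp (Complex.I * ζ * |t|) * Complex.exp (Complex.I * z * t)
    with hf
  set c : ℂ := -(Complex.I * ζ + Complex.I * (z : ℂ)) with hc
  set d : ℂ := -(Complex.I * ζ - Complex.I * (z : ℂ)) with hd
  have hcre : 0 < c.re := by
    simp [hc, Complex.add_re, Complex.mul_re]
    exact hζ
  have hdre : 0 < d.re := by
    simp [hd, Complex.sub_re, Complex.mul_re]
    exact hζ
  have hz1 : (z : ℂ) - ζ ≠ 0 := fun h => by
    have := congrArg Complex.im h
    simp at this
    linarith
  have hz2 : (z : ℂ) + ζ ≠ 0 := fun h => by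
    have := congrArg Complex.im h
    simp at this
    linarith
  have hpos : ∀ t ∈ Ioi (0 : ℝ), f t = (t : ℂ) ^ (n + 1) * Complex.exp (-(c * t)) := by
    intro t ht
    rw [hf]
    simp only
    rw [abs_of_pos ht, mul_assoc, ← Complex.exp_add]
    rw [show Complex.I * ζ * (t : ℂ) + Complex.I * (z : ℂ) * (t : ℂ) = -(c * t) by
      rw [hc]; ring]
  have hnegpt : ∀ t ∈ Ioi (0 : ℝ),
      f (-t) = (-1 : ℂ) ^ (n + 1) * ((t : ℂ) ^ (n + 1) * Complex.exp (-(d * t))) := by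
    intro t ht
    rw [hf]
    simp only
    rw [abs_neg, abs_of_pos ht]
    push_cast
    rw [mul_assoc, ← Complex.exp_add]
    rw [show Complex.I * ζ * (t : ℂ) + Complex.I * (z : ℂ) * (-(t : ℂ)) = -(d * t) by
      rw [hd]; ring]
    rw [neg_pow]
    ring
  have hIoi : IntegrableOn f (Ioi 0) := by
    exact (aux_integrableOn c hcre (n + 1)).congr_fun (fun t ht => (hpos t ht).symm)
      measurableSet_Ioi
  have key : IntegrableOn (fun x : ℝ => f (-x)) (Ioi 0) :=
    IntegrableOn.congr_fun ((aux_integrableOn d hdre (n + 1)).const_mul ((-1 : ℂ) ^ (n + 1)))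
      (fun t ht => (hnegpt t ht).symm) measurableSet_Ioi
  have hIio : IntegrableOn f (Iio 0) := by
    have A : MeasurableEmbedding (fun x : ℝ => -x) :=
      (Homeomorph.neg ℝ).isClosedEmbedding.measurableEmbedding
    have hiff := A.integrableOn_map_iff (f := f) (s := Iio 0) (μ := volume)
    rw [Measure.map_neg_eq_self] at hiff
    rw [hiff]
    have hpre : (fun x : ℝ => -x) ⁻¹' (Iio 0) = Ioi 0 := by ext x; simp
    rw [hpre]
    exact key
  have hIic : IntegrableOn f (Iic 0) := Iff.mpr integrableOn_Iic_iff_integrableOn_Iio hIio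
  have hint : Integrable f := by
    rw [← integrableOn_univ, ← Set.Iic_union_Ioi (a := (0 : ℝ))]
    exact hIic.union hIoi
  refine ⟨hint, hz1, hz2, ?_⟩
  have hsplit := intervalIntegral.integral_Iic_add_Ioi hIic hIoi
  have hIoiVal : ∫ t in Ioi (0 : ℝ), f t = ((n + 1).factorial : ℂ) / c ^ (n + 2) := by
    rw [setIntegral_congr_fun measurableSet_Ioi hpos, aux_integral c hcre (n + 1)]
  have hIicVal : ∫ t in Iic (0 : ℝ), f t
      = (-1 : ℂ) ^ (n + 1) * (((n + 1).factorial : ℂ) / d ^ (n + 2)) := by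
    have h1 := integral_comp_neg_Iic (0 : ℝ) (fun x => f (-x))
    simp only [neg_neg, neg_zero] at h1
    rw [h1, setIntegral_congr_fun measurableSet_Ioi hnegpt, integral_const_mul,
      aux_integral d hdre (n + 1)]
  rw [← hsplit, hIoiVal, hIicVal]
  -- algebra
  have hcc : c = -Complex.I * ((z : ℂ) + ζ) := by rw [hc]; ring
  have hdd : d = Complex.I * ((z : ℂ) - ζ) := by rw [hd]; ring
  have k1 : (Complex.I ^ (n + 2))⁻¹ * (-1 : ℂ) ^ (n + 1) = Complex.I ^ n := by
    rw [inv_mul_eq_iff_eq_mul₀ (pow_ne_zero _ Complex.I_ne_zero), ← pow_add,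
      show n + 2 + n = 2 * (n + 1) by ring, pow_mul, Complex.I_sq]
  have k2 : ((-Complex.I) ^ (n + 2))⁻¹ = -(Complex.I ^ n) := by
    rw [← inv_pow, inv_neg, Complex.inv_I, neg_neg, pow_add, Complex.I_sq, mul_neg_one]
  rw [hcc, hdd, mul_pow, mul_pow, div_eq_mul_inv, div_eq_mul_inv, mul_inv, mul_inv, k2]
  linear_combination (((n + 1).factorial : ℂ) * ((((z : ℂ) - ζ) ^ (n + 2))⁻¹)) * k1
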